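/- arXiv:1406.3334 — 5 statements merged into one kernel-verified Lean document; each statement's English description precedes it below -/
import Mathlib

section
/- Fix p ∈ {1,…,d} and λ > 0. If √(σ̂_p² − R̂_p) < ŵ_p λ / 2, then the Lasso k-means codebook satisfies ĉ_{n,λ}^{(p)} = (ĉ_{n,λ,1}^{(p)},…,ĉ_{n,λ,k}^{(p)}) = (0,…,0). -/
open MeasureTheory ProbabilityTheory Real Matrix Filter

noncomputable section

/-- The k-means contrast: `γ(c, x) = min_j ‖x − c_j‖²`. -/
def gammaF {d k : ℕ} (c : Fin k → EuclideanSpace ℝ (Fin d))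
    (x : EuclideanSpace ℝ (Fin d)) : ℝ :=
  ⨅ j, ‖x - c j‖ ^ 2

/-- The distortion `R(c) = ∫ min_j ‖x − c_j‖² dP(x)`. -/
def distortion {d k : ℕ} (P : Measure (EuclideanSpace ℝ (Fin d)))
    (c : Fin k → EuclideanSpace ℝ (Fin d)) : ℝ :=
  ∫ x, gammaF c x ∂P

/-- The constraint set `C^k`, where `C = ∏_p [−M_p, M_p]`. -/
def Ck {d : ℕ} (k : ℕ) (Mb : Fin d → ℝ) : Set (Fin k → EuclideanSpace ℝ (Fin d)) :=
  {c | ∀ j p, |c j p| ≤ Mb p}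

/-- `‖c^{(p)}‖`, the Euclidean norm of the vector of p-th coordinates of the code points. -/
def coordNorm {d k : ℕ} (c : Fin k → EuclideanSpace ℝ (Fin d)) (p : Fin d) : ℝ :=
  Real.sqrt (∑ j, (c j p) ^ 2)

/-- The penalty `I_w(c) = ∑_p w_p ‖c^{(p)}‖`. -/
def pen {d k : ℕ} (w : Fin d → ℝ) (c : Fin k → EuclideanSpace ℝ (Fin d)) : ℝ :=
  ∑ p, w p * coordNorm c p

/-- The support `S(c) = {p : c^{(p)} ≠ 0}`. -/
def supp {d k : ℕ} (c : Fin k → EuclideanSpace ℝ (Fin d)) : Set (Fin d) :=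
  {p | ∃ j, c j p ≠ 0}

/-- Squared Euclidean distance `‖c − c'‖²` between codebooks, seen as kd-dimensional vectors. -/
def distsq {d k : ℕ} (c c' : Fin k → EuclideanSpace ℝ (Fin d)) : ℝ :=
  ∑ j, ‖c j - c' j‖ ^ 2

/-- The empirical distortion `P_n γ(c, ·)` associated with the sample `X`. -/
def empRisk {d k n : ℕ} (X : Fin n → EuclideanSpace ℝ (Fin d))
    (c : Fin k → EuclideanSpace ℝ (Fin d)) : ℝ :=
  (1 : ℝ) / n * ∑ i, gammaF c (X i)

/-- The set `𝓜` of optimal codebooks (global minimizers of the distortion). -/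
def optSet {d : ℕ} (P : Measure (EuclideanSpace ℝ (Fin d))) (k : ℕ) :
    Set (Fin k → EuclideanSpace ℝ (Fin d)) :=
  {cs | ∀ c : Fin k → EuclideanSpace ℝ (Fin d), distortion P cs ≤ distortion P c}

/-- `‖w_{S(c)}‖² = ∑_{p ∈ S(c)} w_p²`. -/
def wnormsq {d k : ℕ} (w : Fin d → ℝ) (c : Fin k → EuclideanSpace ℝ (Fin d)) : ℝ :=
  ∑ p, (supp c).indicator (fun q => (w q) ^ 2) p

/-- Proposition `KKTlasso`: if `√(σ̂_p² − R̂_p) < ŵ_p λ / 2` then the Lasso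
k-means codebook has zero p-th coordinate. -/
theorem lasso_kmeans_zero_coordinate
    (d k n : ℕ) (hd : 0 < d) (hk : 0 < k) (hn : 0 < n)
    (Mb : Fin d → ℝ) (hMb : ∀ p, 0 ≤ Mb p)
    -- the sample, with values in `C`
    (X : Fin n → EuclideanSpace ℝ (Fin d)) (hX : ∀ i p, |X i p| ≤ Mb p)
    -- the (possibly data-dependent) weights, and the regularization parameter
    (hatw : Fin d → ℝ) (hhatw : ∀ p, 0 < hatw p)
    (lam : ℝ) (hlam : 0 < lam)
    -- the Lasso k-means codebook: a minimizer of the penalized empirical distortion over `C^k`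
    (hatc : Fin k → EuclideanSpace ℝ (Fin d)) (hmem : hatc ∈ Ck k Mb)
    (hmin : ∀ c ∈ Ck k Mb,
      empRisk X hatc + lam * pen hatw hatc ≤ empRisk X c + lam * pen hatw c)
    -- the coordinate `p`, the empirical second moment `σ̂_p²` and optimal distortion `R̂_p`
    (p : Fin d) (sigmahat2 Rhat : ℝ)
    (hsig : sigmahat2 = (1 : ℝ) / n * ∑ i, (X i p) ^ 2)
    (hRhat : Rhat = ⨅ a : {a : Fin k → ℝ // ∀ j, |a j| ≤ Mb p},
      (1 : ℝ) / n * ∑ i, ⨅ j, (X i p - a.1 j) ^ 2)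
    -- the condition
    (hcond : Real.sqrt (sigmahat2 - Rhat) < hatw p * lam / 2) :
    ∀ j, hatc j p = 0 := by
  classical
  haveI hk' : Nonempty (Fin k) := Fin.pos_iff_nonempty.mp hk
  have hn' : (0:ℝ) < n := by exact_mod_cast hn
  have hmem' : ∀ j q, |hatc j q| ≤ Mb q := hmem
  -- choose an optimal assignment φ
  have hassign : ∀ i : Fin n, ∃ j, gammaF hatc (X i) = ‖X i - hatc j‖ ^ 2 := by
    intro i
    obtain ⟨j, hj⟩ := exists_eq_ciInf_of_finite (f := fun j : Fin k => ‖X i - hatc j‖ ^ 2)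
    exact ⟨j, hj.symm⟩
  choose φ hφ using hassign
  -- the zeroed codebook
  set c' : Fin k → EuclideanSpace ℝ (Fin d) :=
    fun j => WithLp.toLp 2 (fun q => if q = p then 0 else hatc j q) with hc'def
  have hc'app : ∀ j q, c' j q = if q = p then 0 else hatc j q := fun j q => rfl
  -- squared norms in EuclideanSpace
  have hnormsq : ∀ (y : EuclideanSpace ℝ (Fin d)), ‖y‖ ^ 2 = ∑ q, (y q) ^ 2 := by
    intro y
    rw [EuclideanSpace.norm_eq, Real.sq_sqrt (Finset.sum_nonneg fun q _ => sq_nonneg _)]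
    simp [sq_abs]
  have hsubapp : ∀ (y z : EuclideanSpace ℝ (Fin d)) (q : Fin d), (y - z) q = y q - z q :=
    fun _ _ _ => rfl
  have normsq : ∀ (x : EuclideanSpace ℝ (Fin d)) (j : Fin k),
      ‖x - c' j‖ ^ 2 = ‖x - hatc j‖ ^ 2 - (x p - hatc j p) ^ 2 + (x p) ^ 2 := by
    intro x j
    rw [hnormsq, hnormsq]
    have key : ∀ q : Fin d, ((x - c' j) q) ^ 2
        = ((x - hatc j) q) ^ 2 + (if q = p then (x p) ^ 2 - (x p - hatc j p) ^ 2 else 0) := by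
      intro q
      rw [hsubapp, hsubapp, hc'app]
      by_cases h : q = p
      · rw [if_pos h, if_pos h, h]
        ring
      · rw [if_neg h, if_neg h]
        ring
    rw [Finset.sum_congr rfl (fun q _ => key q), Finset.sum_add_distrib,
      Finset.sum_ite_eq' Finset.univ p (fun _ => (x p) ^ 2 - (x p - hatc j p) ^ 2)]
    simp only [Finset.mem_univ, if_true]
    ring
  -- abbreviation
  have hW0 : 0 ≤ coordNorm hatc p := Real.sqrt_nonneg _
  have hW2 : coordNorm hatc p ^ 2 = ∑ j, (hatc j p) ^ 2 :=
    Real.sq_sqrt (Finset.sum_nonneg fun j _ => sq_nonneg _)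
  -- penalty difference
  have hcnorm' : coordNorm c' p = 0 := by
    unfold coordNorm
    have hz : ∀ j : Fin k, j ∈ Finset.univ → (c' j p) ^ 2 = 0 := fun j _ => by
      rw [hc'app]; simp
    rw [Finset.sum_congr rfl hz]
    simp
  have hpen : pen hatw hatc - pen hatw c' = hatw p * coordNorm hatc p := by
    unfold pen
    rw [← Finset.sum_sub_distrib, Finset.sum_eq_single p]
    · rw [hcnorm']; ring
    · intro q _ hq
      have hcq : coordNorm c' q = coordNorm hatc q := by
        unfold coordNorm
        congr 1
        refine Finset.sum_congr rfl fun j _ => ?_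
        rw [hc'app, if_neg hq]
      rw [hcq]; ring
    · intro h; exact absurd (Finset.mem_univ p) h
  -- c' is feasible
  have hc'mem : c' ∈ Ck k Mb := by
    have : ∀ j q, |c' j q| ≤ Mb q := by
      intro j q
      rw [hc'app]
      by_cases h : q = p
      · rw [if_pos h, h]; simpa using hMb p
      · rw [if_neg h]; exact hmem' j q
    exact this
  -- empirical risk comparison
  have h6 : empRisk X c' ≤ empRisk X hatc
      + (1:ℝ)/n * ∑ i, ((X i p) ^ 2 - (X i p - hatc (φ i) p) ^ 2) := by
    have hpt : ∀ i, gammaF c' (X i)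
        ≤ gammaF hatc (X i) + ((X i p) ^ 2 - (X i p - hatc (φ i) p) ^ 2) := by
      intro i
      have h1 : gammaF c' (X i) ≤ ‖X i - c' (φ i)‖ ^ 2 :=
        ciInf_le (Set.Finite.bddBelow (Set.finite_range _)) (φ i)
      rw [normsq (X i) (φ i)] at h1
      rw [hφ i]
      linarith
    unfold empRisk
    rw [← mul_add, ← Finset.sum_add_distrib]
    exact mul_le_mul_of_nonneg_left (Finset.sum_le_sum fun i _ => hpt i) (by positivity)
  -- main inequality from minimality
  have hmain : lam * (hatw p * coordNorm hatc p)
      ≤ (1:ℝ)/n * ∑ i, ((X i p) ^ 2 - (X i p - hatc (φ i) p) ^ 2) := by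
    have hstep := hmin c' hc'mem
    have hpen2 : lam * pen hatw hatc - lam * pen hatw c'
        = lam * (hatw p * coordNorm hatc p) := by
      rw [← mul_sub, hpen]
    linarith
  -- cell quantities
  set S : Fin k → ℝ := fun j => ∑ i, (if φ i = j then X i p else 0) with hSdef
  set N : Fin k → ℝ := fun j => ∑ i, (if φ i = j then (1:ℝ) else 0) with hNdef
  have hSj : ∀ j, S j = ∑ i, (if φ i = j then X i p else 0) := fun j => rfl
  have hNj : ∀ j, N j = ∑ i, (if φ i = j then (1:ℝ) else 0) := fun j => rfl
  have hN0 : ∀ j, 0 ≤ N j := fun j => by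
    rw [hNj]
    exact Finset.sum_nonneg fun i _ => by split <;> norm_num
  have hNn : ∀ j, N j ≤ n := by
    intro j
    rw [hNj]
    calc ∑ i, (if φ i = j then (1:ℝ) else 0) ≤ ∑ _i : Fin n, (1:ℝ) :=
          Finset.sum_le_sum fun i _ => by split <;> norm_num
    _ = n := by simp
  have hSzero : ∀ j, N j = 0 → S j = 0 := by
    intro j hj
    rw [hNj] at hj
    have hall : ∀ i ∈ Finset.univ, (if φ i = j then (1:ℝ) else 0) = 0 :=
      (Finset.sum_eq_zero_iff_of_nonneg (fun i _ => by split <;> norm_num)).mp hj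
    rw [hSj]
    refine Finset.sum_eq_zero fun i _ => ?_
    by_cases hc : φ i = j
    · have h1 := hall i (Finset.mem_univ i)
      rw [if_pos hc] at h1
      norm_num at h1
    · rw [if_neg hc]
  have hSbound : ∀ j, |S j| ≤ N j * Mb p := by
    intro j
    rw [hSj, hNj]
    calc |∑ i, (if φ i = j then X i p else 0)|
        ≤ ∑ i, |if φ i = j then X i p else 0| := Finset.abs_sum_le_sum_abs _ _
    _ ≤ ∑ i, (if φ i = j then (1:ℝ) else 0) * Mb p := by
        refine Finset.sum_le_sum fun i _ => ?_
        by_cases hc : φ i = j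
        · rw [if_pos hc, if_pos hc, one_mul]; exact hX i p
        · rw [if_neg hc, if_neg hc]; simp
    _ = (∑ i, (if φ i = j then (1:ℝ) else 0)) * Mb p := by rw [Finset.sum_mul]
  -- swap lemmas
  have hswap1 : ∀ f : Fin k → ℝ, ∑ i, f (φ i) * X i p = ∑ j, f j * S j := by
    intro f
    calc ∑ i, f (φ i) * X i p
        = ∑ i, ∑ j, (if φ i = j then f j * X i p else 0) := by
          refine Finset.sum_congr rfl fun i _ => ?_
          rw [Finset.sum_ite_eq Finset.univ (φ i) (fun j => f j * X i p)]
          simp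
      _ = ∑ j, ∑ i, (if φ i = j then f j * X i p else 0) := Finset.sum_comm
      _ = ∑ j, f j * S j := by
          refine Finset.sum_congr rfl fun j _ => ?_
          rw [hSj, Finset.mul_sum]
          refine Finset.sum_congr rfl fun i _ => ?_
          split <;> simp
  have hswap2 : ∀ f : Fin k → ℝ, ∑ i, f (φ i) = ∑ j, f j * N j := by
    intro f
    calc ∑ i, f (φ i)
        = ∑ i, ∑ j, (if φ i = j then f j else 0) := by
          refine Finset.sum_congr rfl fun i _ => ?_
          rw [Finset.sum_ite_eq Finset.univ (φ i) (fun j => f j)]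
          simp
      _ = ∑ j, ∑ i, (if φ i = j then f j else 0) := Finset.sum_comm
      _ = ∑ j, f j * N j := by
          refine Finset.sum_congr rfl fun j _ => ?_
          rw [hNj, Finset.mul_sum]
          refine Finset.sum_congr rfl fun i _ => ?_
          split <;> simp
  -- expansion of quantization error along the assignment φ
  have hexp : ∀ b : Fin k → ℝ, ∑ i, (X i p - b (φ i)) ^ 2
      = ∑ i, (X i p) ^ 2 - 2 * ∑ j, b j * S j + ∑ j, (b j) ^ 2 * N j := by
    intro b
    have h1 : ∑ i, b (φ i) * X i p = ∑ j, b j * S j := hswap1 b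
    have h2 : ∑ i, (b (φ i)) ^ 2 = ∑ j, (b j) ^ 2 * N j := hswap2 (fun j => (b j) ^ 2)
    have h3 : ∑ i, (X i p - b (φ i)) ^ 2
        = ∑ i, (X i p) ^ 2 - 2 * ∑ i, b (φ i) * X i p + ∑ i, (b (φ i)) ^ 2 := by
      have hterm : ∀ i : Fin n, (X i p - b (φ i)) ^ 2
          = (X i p) ^ 2 - 2 * (b (φ i) * X i p) + (b (φ i)) ^ 2 := fun i => by ring
      rw [Finset.sum_congr rfl fun i _ => hterm i, Finset.sum_add_distrib,
        Finset.sum_sub_distrib, ← Finset.mul_sum]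
    rw [h3, h1, h2]
  -- rewrite the main inequality
  have hmain2 : lam * (hatw p * coordNorm hatc p)
      ≤ (1:ℝ)/n * (2 * ∑ j, hatc j p * S j - ∑ j, (hatc j p) ^ 2 * N j) := by
    have hbig : ∑ i, (X i p - hatc (φ i) p) ^ 2
        = ∑ i, (X i p) ^ 2 - 2 * ∑ j, hatc j p * S j + ∑ j, (hatc j p) ^ 2 * N j :=
      hexp (fun j => hatc j p)
    have he : ∑ i, ((X i p) ^ 2 - (X i p - hatc (φ i) p) ^ 2)
        = 2 * ∑ j, hatc j p * S j - ∑ j, (hatc j p) ^ 2 * N j := by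
      rw [Finset.sum_sub_distrib, hbig]
      ring
    rw [← he]
    exact hmain
  -- the comparison codebook a*
  set astar : Fin k → ℝ := fun j => if N j = 0 then 0 else S j / N j with hastardef
  have hastarj : ∀ j, astar j = if N j = 0 then 0 else S j / N j := fun j => rfl
  have hfeas : ∀ j, |astar j| ≤ Mb p := by
    intro j
    rw [hastarj]
    by_cases h : N j = 0
    · simpa [h] using hMb p
    · have hNpos : 0 < N j := lt_of_le_of_ne (hN0 j) (Ne.symm h)
      rw [if_neg h, abs_div, abs_of_pos hNpos, div_le_iff₀ hNpos]
      calc |S j| ≤ N j * Mb p := hSbound j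
      _ = Mb p * N j := by ring
  have hP3nonneg : 0 ≤ ∑ j, (if N j = 0 then 0 else (S j) ^ 2 / N j) :=
    Finset.sum_nonneg fun j _ => by
      split
      · exact le_rfl
      · exact div_nonneg (sq_nonneg _) (hN0 j)
  have hastarS : ∑ j, astar j * S j = ∑ j, (if N j = 0 then 0 else (S j) ^ 2 / N j) := by
    refine Finset.sum_congr rfl fun j _ => ?_
    rw [hastarj]
    by_cases h : N j = 0
    · simp [h]
    · rw [if_neg h, if_neg h]
      field_simp
  have hastarN : ∑ j, (astar j) ^ 2 * N j = ∑ j, (if N j = 0 then 0 else (S j) ^ 2 / N j) := by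
    refine Finset.sum_congr rfl fun j _ => ?_
    rw [hastarj]
    by_cases h : N j = 0
    · simp [h]
    · rw [if_neg h, if_neg h]
      field_simp
  -- bound on Rhat via a*
  have hRle : Rhat ≤ sigmahat2 - (1:ℝ)/n * ∑ j, (if N j = 0 then 0 else (S j) ^ 2 / N j) := by
    have houter : BddBelow (Set.range fun a : {a : Fin k → ℝ // ∀ j, |a j| ≤ Mb p} =>
        (1:ℝ)/n * ∑ i, ⨅ j, (X i p - a.1 j) ^ 2) := by
      refine ⟨0, ?_⟩
      rintro y ⟨aa, rfl⟩
      have hin : ∀ i : Fin n, (0:ℝ) ≤ ⨅ j, (X i p - aa.1 j) ^ 2 :=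
        fun i => le_ciInf fun j => sq_nonneg _
      exact mul_nonneg (by positivity) (Finset.sum_nonneg fun i _ => hin i)
    have h1 : Rhat ≤ (1:ℝ)/n * ∑ i, ⨅ j, (X i p - astar j) ^ 2 := by
      rw [hRhat]
      exact ciInf_le houter ⟨astar, hfeas⟩
    have h2 : ∀ i : Fin n, (⨅ j, (X i p - astar j) ^ 2) ≤ (X i p - astar (φ i)) ^ 2 :=
      fun i => ciInf_le (Set.Finite.bddBelow (Set.finite_range _)) (φ i)
    have h3 : (1:ℝ)/n * ∑ i, (⨅ j, (X i p - astar j) ^ 2)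
        ≤ (1:ℝ)/n * ∑ i, (X i p - astar (φ i)) ^ 2 :=
      mul_le_mul_of_nonneg_left (Finset.sum_le_sum fun i _ => h2 i) (by positivity)
    have h4 : ∑ i, (X i p - astar (φ i)) ^ 2
        = ∑ i, (X i p) ^ 2 - ∑ j, (if N j = 0 then 0 else (S j) ^ 2 / N j) := by
      rw [hexp astar, hastarS, hastarN]
      ring
    calc Rhat ≤ (1:ℝ)/n * ∑ i, (X i p - astar (φ i)) ^ 2 := le_trans h1 h3
    _ = sigmahat2 - (1:ℝ)/n * ∑ j, (if N j = 0 then 0 else (S j) ^ 2 / N j) := by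
        rw [h4, hsig]; ring
  have hQD : (1:ℝ)/n * ∑ j, (if N j = 0 then 0 else (S j) ^ 2 / N j)
      ≤ sigmahat2 - Rhat := by linarith
  -- Cauchy-Schwarz
  have hCS : ∑ j, hatc j p * S j
      ≤ Real.sqrt (∑ j, (if N j = 0 then 0 else (S j) ^ 2 / N j))
        * Real.sqrt (∑ j, (hatc j p) ^ 2 * N j) := by
    set x : Fin k → ℝ := fun j => if N j = 0 then 0 else S j / Real.sqrt (N j) with hxdef
    set y : Fin k → ℝ := fun j => Real.sqrt (N j) * hatc j p with hydef
    have hxj : ∀ j, x j = if N j = 0 then 0 else S j / Real.sqrt (N j) := fun j => rfl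
    have hyj : ∀ j, y j = Real.sqrt (N j) * hatc j p := fun j => rfl
    have hxy : ∀ j, x j * y j = hatc j p * S j := by
      intro j
      rw [hxj, hyj]
      by_cases h : N j = 0
      · simp [h, hSzero j h]
      · have hNpos : 0 < N j := lt_of_le_of_ne (hN0 j) (Ne.symm h)
        have hs : Real.sqrt (N j) ≠ 0 := by positivity
        have hr : S j / Real.sqrt (N j) * (Real.sqrt (N j) * hatc j p)
            = hatc j p * (S j * (Real.sqrt (N j) / Real.sqrt (N j))) := by ring
        rw [if_neg h, hr, div_self hs, mul_one]
    have hx2 : ∑ j, (x j) ^ 2 = ∑ j, (if N j = 0 then 0 else (S j) ^ 2 / N j) := by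
      refine Finset.sum_congr rfl fun j _ => ?_
      rw [hxj]
      by_cases h : N j = 0
      · simp [h]
      · have hNpos : 0 < N j := lt_of_le_of_ne (hN0 j) (Ne.symm h)
        rw [if_neg h, if_neg h, div_pow, Real.sq_sqrt (le_of_lt hNpos)]
    have hy2 : ∑ j, (y j) ^ 2 = ∑ j, (hatc j p) ^ 2 * N j := by
      refine Finset.sum_congr rfl fun j _ => ?_
      rw [hyj, mul_pow, Real.sq_sqrt (hN0 j)]
      ring
    have hcs := Finset.sum_mul_sq_le_sq_mul_sq Finset.univ x y
    rw [hx2, hy2] at hcs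
    have hP1eq : ∑ j, hatc j p * S j = ∑ j, x j * y j :=
      Finset.sum_congr rfl fun j _ => (hxy j).symm
    calc ∑ j, hatc j p * S j ≤ |∑ j, hatc j p * S j| := le_abs_self _
    _ = Real.sqrt ((∑ j, hatc j p * S j) ^ 2) := (Real.sqrt_sq_eq_abs _).symm
    _ ≤ Real.sqrt ((∑ j, (if N j = 0 then 0 else (S j) ^ 2 / N j))
          * ∑ j, (hatc j p) ^ 2 * N j) := by
        apply Real.sqrt_le_sqrt
        rw [hP1eq]
        exact hcs
    _ = _ := Real.sqrt_mul hP3nonneg _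
  -- bound the two square roots
  have hP2nonneg : 0 ≤ ∑ j, (hatc j p) ^ 2 * N j :=
    Finset.sum_nonneg fun j _ => mul_nonneg (sq_nonneg _) (hN0 j)
  have hP3le : ∑ j, (if N j = 0 then 0 else (S j) ^ 2 / N j) ≤ n * (sigmahat2 - Rhat) := by
    have h := mul_le_mul_of_nonneg_left hQD (le_of_lt hn')
    have hinv : (n:ℝ) * ((1:ℝ)/n * ∑ j, (if N j = 0 then 0 else (S j) ^ 2 / N j))
        = ∑ j, (if N j = 0 then 0 else (S j) ^ 2 / N j) := by
      field_simp
    rw [hinv] at h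
    exact h
  have hs3 : Real.sqrt (∑ j, (if N j = 0 then 0 else (S j) ^ 2 / N j))
      ≤ Real.sqrt n * Real.sqrt (sigmahat2 - Rhat) := by
    rw [← Real.sqrt_mul (le_of_lt hn')]
    exact Real.sqrt_le_sqrt hP3le
  have hP2le : ∑ j, (hatc j p) ^ 2 * N j ≤ n * coordNorm hatc p ^ 2 := by
    rw [hW2, Finset.mul_sum]
    refine Finset.sum_le_sum fun j _ => ?_
    nlinarith [hNn j, sq_nonneg (hatc j p), hN0 j]
  have hs2 : Real.sqrt (∑ j, (hatc j p) ^ 2 * N j) ≤ Real.sqrt n * coordNorm hatc p := by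
    calc Real.sqrt (∑ j, (hatc j p) ^ 2 * N j)
        ≤ Real.sqrt ((n:ℝ) * coordNorm hatc p ^ 2) := Real.sqrt_le_sqrt hP2le
    _ = Real.sqrt n * Real.sqrt (coordNorm hatc p ^ 2) := Real.sqrt_mul (le_of_lt hn') _
    _ = Real.sqrt n * coordNorm hatc p := by rw [Real.sqrt_sq hW0]
  have hP1le : ∑ j, hatc j p * S j
      ≤ (n:ℝ) * (Real.sqrt (sigmahat2 - Rhat) * coordNorm hatc p) := by
    have hmm : Real.sqrt (∑ j, (if N j = 0 then 0 else (S j) ^ 2 / N j))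
          * Real.sqrt (∑ j, (hatc j p) ^ 2 * N j)
        ≤ (Real.sqrt n * Real.sqrt (sigmahat2 - Rhat)) * (Real.sqrt n * coordNorm hatc p) :=
      mul_le_mul hs3 hs2 (Real.sqrt_nonneg _) (by positivity)
    calc ∑ j, hatc j p * S j
        ≤ Real.sqrt (∑ j, (if N j = 0 then 0 else (S j) ^ 2 / N j))
          * Real.sqrt (∑ j, (hatc j p) ^ 2 * N j) := hCS
    _ ≤ (Real.sqrt n * Real.sqrt (sigmahat2 - Rhat)) * (Real.sqrt n * coordNorm hatc p) := hmm
    _ = (Real.sqrt n * Real.sqrt n) * (Real.sqrt (sigmahat2 - Rhat) * coordNorm hatc p) := by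
        ring
    _ = (n:ℝ) * (Real.sqrt (sigmahat2 - Rhat) * coordNorm hatc p) := by
        rw [Real.mul_self_sqrt (le_of_lt hn')]
  -- final comparison
  have hfin : lam * (hatw p * coordNorm hatc p)
      ≤ 2 * Real.sqrt (sigmahat2 - Rhat) * coordNorm hatc p := by
    have h2 : (1:ℝ)/n * (2 * ∑ j, hatc j p * S j - ∑ j, (hatc j p) ^ 2 * N j)
        ≤ (1:ℝ)/n * (2 * ((n:ℝ) * (Real.sqrt (sigmahat2 - Rhat) * coordNorm hatc p))) := by
      apply mul_le_mul_of_nonneg_left _ (by positivity)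
      linarith
    have h3 : (1:ℝ)/n * (2 * ((n:ℝ) * (Real.sqrt (sigmahat2 - Rhat) * coordNorm hatc p)))
        = 2 * Real.sqrt (sigmahat2 - Rhat) * coordNorm hatc p := by
      field_simp
    linarith [hmain2]
  have hWzero : coordNorm hatc p = 0 := by
    rcases eq_or_lt_of_le hW0 with h | h
    · exact h.symm
    · exfalso
      have hlt : 2 * Real.sqrt (sigmahat2 - Rhat) < hatw p * lam := by linarith
      have hcontr := mul_lt_mul_of_pos_right hlt h
      linarith [hfin, hcontr]
  intro j
  have hsum : ∑ j', (hatc j' p) ^ 2 = 0 := by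
    rw [← hW2, hWzero]
    norm_num
  have hjz := (Finset.sum_eq_zero_iff_of_nonneg
    (fun j' _ => sq_nonneg (hatc j' p))).mp hsum j (Finset.mem_univ j)
  exact (pow_eq_zero_iff two_ne_zero).mp hjz

end
end

section
/- Suppose the set 𝓜 of optimal codebooks is finite and nonempty, and that no optimal codebook has support strictly contained in the support of another optimal codebook, i.e. for every c* ∈ 𝓜 and every c ∈ C^k with S(c) ⊊ S(c*) one has R(c) > R(c*). Then there exists a constant κ₀'' > 0 such that for every c* ∈ 𝓜 and every c ∈ C^k with S(c) ⊊ S(c*), ‖c − c*‖² ≤ κ₀'' ℓ(c, c*). -/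
open MeasureTheory ProbabilityTheory Real Matrix Filter

noncomputable section

/-- third part of Proposition `TMC`: if `𝓜` is finite and nonempty and no
optimal codebook has support strictly contained in the support of another optimal codebook,
then there is `κ₀'' > 0` with `‖c − c*‖² ≤ κ₀'' ℓ(c, c*)` whenever `S(c) ⊊ S(c*)`. -/
theorem exists_kappa_of_no_subcodebook
    (d k : ℕ) (hd : 0 < d) (hk : 0 < k)
    (P : Measure (EuclideanSpace ℝ (Fin d))) [IsProbabilityMeasure P]
    (Mb : Fin d → ℝ) (hMb : ∀ p, 0 ≤ Mb p)
    (hbound : ∀ p : Fin d, ∀ᵐ x ∂P, |x p| ≤ Mb p)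
    -- `𝓜` is finite, nonempty, and contained in `C^k`
    (hfin : (optSet P k).Finite) (hne : (optSet P k).Nonempty)
    (hsub : optSet P k ⊆ Ck k Mb)
    -- Assumption 1: no optimal codebook has support strictly contained in the support of
    -- another optimal codebook
    (hass : ∀ cs ∈ optSet P k, ∀ c ∈ Ck k Mb,
      supp c ⊂ supp cs → distortion P cs < distortion P c) :
    ∃ κ : ℝ, 0 < κ ∧ ∀ cs ∈ optSet P k, ∀ c ∈ Ck k Mb,
      supp c ⊂ supp cs →
        distsq c cs ≤ κ * (distortion P c - distortion P cs) := by
  classical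
  haveI : Nonempty (Fin k) := ⟨⟨0, hk⟩⟩
  set M : ℝ := Real.sqrt (∑ p, (Mb p)^2) with hMdef
  have hM0 : 0 ≤ M := Real.sqrt_nonneg _
  -- points with coordinate bounds have norm at most M
  have normbound : ∀ y : EuclideanSpace ℝ (Fin d), (∀ p, |y p| ≤ Mb p) → ‖y‖ ≤ M := by
    intro y hy
    rw [EuclideanSpace.norm_eq]
    apply Real.sqrt_le_sqrt
    apply Finset.sum_le_sum
    intro p _
    rw [Real.norm_eq_abs]
    have := hy p
    nlinarith [abs_nonneg (y p)]
  have hcn : ∀ c ∈ Ck k Mb, ∀ j, ‖c j‖ ≤ M := fun c hc j => normbound _ (fun p => hc j p)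
  have hxM : ∀ᵐ x ∂P, ‖x‖ ≤ M := by
    have h := (MeasureTheory.ae_all_iff).2 hbound
    filter_upwards [h] with x hx using normbound x hx
  -- basic facts about gammaF
  have gnonneg : ∀ (c : Fin k → EuclideanSpace ℝ (Fin d)) x, 0 ≤ gammaF c x :=
    fun c x => Real.iInf_nonneg (fun j => by positivity)
  have gle : ∀ (c : Fin k → EuclideanSpace ℝ (Fin d)) x j, gammaF c x ≤ ‖x - c j‖^2 := by
    intro c x j
    exact ciInf_le ⟨0, by rintro _ ⟨i, rfl⟩; positivity⟩ j
  have gbound : ∀ c ∈ Ck k Mb, ∀ x : EuclideanSpace ℝ (Fin d), ‖x‖ ≤ M →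
      gammaF c x ≤ (2*M)^2 := by
    intro c hc x hx
    refine le_trans (gle c x ⟨0, hk⟩) ?_
    have h1 : ‖x - c ⟨0, hk⟩‖ ≤ 2*M :=
      le_trans (norm_sub_le _ _) (by linarith [hcn c hc ⟨0, hk⟩])
    nlinarith [norm_nonneg (x - c ⟨0, hk⟩)]
  have gmeas : ∀ c : Fin k → EuclideanSpace ℝ (Fin d), Measurable (gammaF c) := by
    intro c
    apply Measurable.iInf
    intro j
    exact (((continuous_id.sub continuous_const).norm).pow 2).measurable
  have gint : ∀ c ∈ Ck k Mb, Integrable (gammaF c) P := by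
    intro c hc
    refine (integrable_const ((2*M)^2)).mono' (gmeas c).aestronglyMeasurable ?_
    filter_upwards [hxM] with x hx
    rw [Real.norm_eq_abs, abs_of_nonneg (gnonneg c x)]
    exact gbound c hc x hx
  -- pointwise Lipschitz-type bound
  have gLip : ∀ c ∈ Ck k Mb, ∀ c' ∈ Ck k Mb, ∀ x : EuclideanSpace ℝ (Fin d), ‖x‖ ≤ M →
      gammaF c x ≤ gammaF c' x + 4*M*dist c c' := by
    intro c hc c' hc' x hx
    have key : gammaF c x - 4*M*dist c c' ≤ gammaF c' x := by
      refine le_ciInf fun j => ?_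
      have h1 : gammaF c x ≤ ‖x - c j‖^2 := gle c x j
      have h2 : |‖x - c j‖ - ‖x - c' j‖| ≤ ‖c j - c' j‖ := by
        have h := abs_norm_sub_norm_le (x - c j) (x - c' j)
        have heq : (x - c j) - (x - c' j) = c' j - c j := by abel
        rw [heq] at h
        calc |‖x - c j‖ - ‖x - c' j‖| ≤ ‖c' j - c j‖ := h
          _ = ‖c j - c' j‖ := norm_sub_rev _ _
      have h3 : ‖c j - c' j‖ ≤ dist c c' := by
        rw [← dist_eq_norm]; exact dist_le_pi_dist c c' j
      have h4 : ‖x - c j‖ ≤ 2*M := le_trans (norm_sub_le _ _) (by linarith [hcn c hc j])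
      have h5 : ‖x - c' j‖ ≤ 2*M := le_trans (norm_sub_le _ _) (by linarith [hcn c' hc' j])
      have h6 := abs_le.1 h2
      nlinarith [norm_nonneg (x - c j), norm_nonneg (x - c' j), dist_nonneg (x := c) (y := c')]
    linarith
  -- one-sided Lipschitz bound for the distortion
  have Rlip : ∀ c ∈ Ck k Mb, ∀ c' ∈ Ck k Mb,
      distortion P c ≤ distortion P c' + 4*M*dist c c' := by
    intro c hc c' hc'
    have hintg : Integrable (fun x => gammaF c' x + 4*M*dist c c') P :=
      (gint c' hc').add (integrable_const _)
    have hae : (fun x => gammaF c x) ≤ᵐ[P] (fun x => gammaF c' x + 4*M*dist c c') := by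
      filter_upwards [hxM] with x hx using gLip c hc c' hc' x hx
    have h := integral_mono_ae (gint c hc) hintg hae
    rw [integral_add (gint c' hc') (integrable_const _), integral_const] at h
    simpa [measure_univ, distortion] using h
  -- continuity of the distortion on Ck
  have Rcont : ContinuousOn (distortion P) (Ck k Mb) := by
    have hlip : LipschitzOnWith (Real.toNNReal (4*M)) (distortion P) (Ck k Mb) := by
      apply LipschitzOnWith.of_dist_le_mul
      intro c hc c' hc'
      rw [Real.dist_eq]
      have hco : (Real.toNNReal (4*M) : ℝ) = 4*M := Real.coe_toNNReal _ (by linarith)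
      rw [hco]
      have h1 := Rlip c hc c' hc'
      have h2 := Rlip c' hc' c hc
      rw [dist_comm c' c] at h2
      rw [abs_le]
      constructor <;> linarith
    exact hlip.continuousOn
  -- coordinate projections are continuous
  have hcontjp : ∀ (j : Fin k) (p : Fin d),
      Continuous (fun c : Fin k → EuclideanSpace ℝ (Fin d) => c j p) := by
    intro j p
    exact (EuclideanSpace.proj (𝕜 := ℝ) p).continuous.comp (continuous_apply j)
  -- Ck is compact
  have CkClosed : IsClosed (Ck k Mb) := by
    have heq : Ck k Mb = ⋂ (j : Fin k), ⋂ (p : Fin d),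
        {c : Fin k → EuclideanSpace ℝ (Fin d) | |c j p| ≤ Mb p} := by
      ext c; simp [Ck, Set.mem_iInter]
    rw [heq]
    exact isClosed_iInter fun j => isClosed_iInter fun p =>
      isClosed_le ((hcontjp j p).abs) continuous_const
  have CkCompact : IsCompact (Ck k Mb) := by
    have hss : Ck k Mb ⊆ Set.univ.pi (fun _ : Fin k => Metric.closedBall (0 : EuclideanSpace ℝ (Fin d)) M) := by
      intro c hc j _
      simpa [Metric.mem_closedBall, dist_zero_right] using hcn c hc j
    exact (isCompact_univ_pi fun _ => isCompact_closedBall 0 M).of_isClosed_subset CkClosed hss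
  -- key lemma: a positive gap for each optimal codebook and each strict support subset
  have key : ∀ cs ∈ optSet P k, ∀ S : Finset (Fin d), ↑S ⊂ supp cs →
      ∃ ε > 0, ∀ c ∈ Ck k Mb, supp c ⊆ ↑S → ε ≤ distortion P c - distortion P cs := by
    intro cs hcs S hS
    set K : Set (Fin k → EuclideanSpace ℝ (Fin d)) :=
      Ck k Mb ∩ {c | ∀ j p, p ∉ S → c j p = 0} with hKdef
    have hKsub : K ⊆ Ck k Mb := Set.inter_subset_left
    have hKclosed : IsClosed K := by
      apply CkClosed.inter
      have heq : {c : Fin k → EuclideanSpace ℝ (Fin d) | ∀ j p, p ∉ S → c j p = 0} =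
          ⋂ (j : Fin k), ⋂ (p : Fin d), ⋂ (_ : p ∉ S), {c | c j p = 0} := by
        ext c; simp [Set.mem_iInter]
      rw [heq]
      exact isClosed_iInter fun j => isClosed_iInter fun p => isClosed_iInter fun _ =>
        isClosed_eq (hcontjp j p) continuous_const
    have hKcompact : IsCompact K := CkCompact.of_isClosed_subset hKclosed hKsub
    have hKne : K.Nonempty := by
      refine ⟨0, ⟨fun j p => by simpa using hMb p, fun j p _ => rfl⟩⟩
    obtain ⟨c₀, hc₀K, hc₀min⟩ := hKcompact.exists_isMinOn hKne (Rcont.mono hKsub)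
    have hsupp : supp c₀ ⊆ ↑S := by
      intro p hp
      obtain ⟨j, hj⟩ := hp
      by_contra h
      exact hj (hc₀K.2 j p h)
    have hss2 : supp c₀ ⊂ supp cs := lt_of_le_of_lt hsupp hS
    have hpos : 0 < distortion P c₀ - distortion P cs :=
      sub_pos.2 (hass cs hcs c₀ hc₀K.1 hss2)
    refine ⟨_, hpos, ?_⟩
    intro c hc hcS
    have hcK : c ∈ K := ⟨hc, fun j p hp => by
      by_contra h
      exact hp (hcS ⟨j, h⟩)⟩
    have := isMinOn_iff.1 hc₀min c hcK
    linarith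
  -- uniform positive gap
  have uniform : ∃ ε > 0, ∀ cs ∈ optSet P k, ∀ c ∈ Ck k Mb, supp c ⊂ supp cs →
      ε ≤ distortion P c - distortion P cs := by
    set T := (hfin.toFinset ×ˢ (Finset.univ : Finset (Finset (Fin d)))).filter
      (fun q => (↑q.2 : Set (Fin d)) ⊂ supp q.1) with hTdef
    have hchoice : ∀ q ∈ T, ∃ ε > 0, ∀ c ∈ Ck k Mb, supp c ⊆ ↑q.2 →
        ε ≤ distortion P c - distortion P q.1 := by
      intro q hq
      simp only [hTdef, Finset.mem_filter, Finset.mem_product, Set.Finite.mem_toFinset] at hq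
      exact key q.1 hq.1.1 q.2 hq.2
    choose! εf hεf1 hεf2 using hchoice
    have hmemT : ∀ cs ∈ optSet P k, ∀ c : Fin k → EuclideanSpace ℝ (Fin d),
        supp c ⊂ supp cs → (cs, (Set.toFinite (supp c)).toFinset) ∈ T := by
      intro cs hcs c hss
      simp only [hTdef, Finset.mem_filter, Finset.mem_product, Set.Finite.mem_toFinset]
      exact ⟨⟨hcs, Finset.mem_univ _⟩, by rwa [Set.Finite.coe_toFinset]⟩
    rcases T.eq_empty_or_nonempty with hTe | hTne
    · refine ⟨1, one_pos, ?_⟩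
      intro cs hcs c hc hss
      exact absurd (hmemT cs hcs c hss) (by simp [hTe])
    · refine ⟨T.inf' hTne εf, (Finset.lt_inf'_iff hTne).2 (fun q hq => hεf1 q hq), ?_⟩
      intro cs hcs c hc hss
      have hq := hmemT cs hcs c hss
      calc T.inf' hTne εf ≤ εf (cs, (Set.toFinite (supp c)).toFinset) := Finset.inf'_le _ hq
        _ ≤ distortion P c - distortion P cs := by
            exact hεf2 _ hq c hc (by rw [Set.Finite.coe_toFinset])
  obtain ⟨ε, hε, hεle⟩ := uniform
  set D : ℝ := k * (2*M)^2 + 1 with hDdef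
  have hD0 : 0 < D := by positivity
  refine ⟨D / ε, div_pos hD0 hε, ?_⟩
  intro cs hcs c hc hss
  have h1 : ε ≤ distortion P c - distortion P cs := hεle cs hcs c hc hss
  have h2 : distsq c cs ≤ D := by
    have hsum : distsq c cs ≤ ∑ _j : Fin k, (2*M)^2 := by
      apply Finset.sum_le_sum
      intro j _
      have ha := hcn c hc j
      have hb := hcn cs (hsub hcs) j
      have hn : ‖c j - cs j‖ ≤ 2*M := le_trans (norm_sub_le _ _) (by linarith)
      nlinarith [norm_nonneg (c j - cs j)]
    have : (∑ _j : Fin k, (2*M)^2 : ℝ) = k * (2*M)^2 := by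
      simp [Finset.sum_const, mul_comm]
    rw [this] at hsum
    linarith
  calc distsq c cs ≤ D := h2
    _ = (D / ε) * ε := by field_simp
    _ ≤ (D / ε) * (distortion P c - distortion P cs) :=
        mul_le_mul_of_nonneg_left h1 (le_of_lt (div_pos hD0 hε))

end
end

section
/- Let λ > 0 and p ∈ {1,…,d}. If σ_p² − R*_p < 8 λ² κ₀ w_p² / 3, then for every c* ∈ 𝓜 every element of 𝓜_λ(c*) has zero p-th coordinate; in particular c*_λ(c*)^{(p)} = (0,…,0). -/
open MeasureTheory ProbabilityTheory Real Matrix Filter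

noncomputable section

private lemma normsub_sq' {d : ℕ} (x y : EuclideanSpace ℝ (Fin d)) :
    ‖x - y‖ ^ 2 = ∑ q, (x q - y q) ^ 2 := by
  rw [EuclideanSpace.norm_eq, Real.sq_sqrt (by positivity)]
  simp [sq_abs]

/-- Proposition `sparseapproximationsupport`: if
`σ_p² − R*_p < 8 λ² κ₀ w_p² / 3`, then every `w`-sparse approximation of an optimal
codebook has zero p-th coordinate. -/
theorem sparse_approximation_zero_coordinate
    (d k : ℕ) (hd : 0 < d) (hk : 0 < k)
    (P : Measure (EuclideanSpace ℝ (Fin d))) [IsProbabilityMeasure P]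
    (Mb : Fin d → ℝ) (hMb : ∀ p, 0 ≤ Mb p)
    (hbound : ∀ p : Fin d, ∀ᵐ x ∂P, |x p| ≤ Mb p)
    -- deterministic weights, the constant `κ₀`, and the regularization parameter `λ`
    (w : Fin d → ℝ) (hwpos : ∀ p, 0 < w p)
    (κ₀ lam : ℝ) (hκ₀ : 0 < κ₀) (hlam : 0 < lam)
    -- the coordinate `p` and the marginal optimal distortion `R*_p`
    (p : Fin d) (Rstar : ℝ)
    (hRstar : Rstar = ⨅ a : {a : Fin k → ℝ // ∀ j, |a j| ≤ Mb p},
      ∫ x, (⨅ j, (x p - a.1 j) ^ 2) ∂P)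
    -- the condition `σ_p² − R*_p < 8 λ² κ₀ w_p² / 3`
    (hcond : (∫ x, (x p) ^ 2 ∂P) - Rstar < 8 * lam ^ 2 * κ₀ * (w p) ^ 2 / 3)
    -- an optimal codebook `c*`
    (cstar : Fin k → EuclideanSpace ℝ (Fin d)) (hcs : cstar ∈ optSet P k)
    -- `c` is an element of `𝓜_λ(c*)`: a minimizer of `3R(c) + 8κ₀λ²‖w_{S(c)}‖²` among
    -- codebooks of `C^k` supported in `S(c*)`
    (c : Fin k → EuclideanSpace ℝ (Fin d))
    (hcmem : c ∈ Ck k Mb) (hcsupp : supp c ⊆ supp cstar)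
    (hcmin : ∀ c' ∈ Ck k Mb, supp c' ⊆ supp cstar →
      3 * distortion P c + 8 * κ₀ * lam ^ 2 * wnormsq w c
        ≤ 3 * distortion P c' + 8 * κ₀ * lam ^ 2 * wnormsq w c') :
    ∀ j, c j p = 0 := by
  intro j0
  by_contra hne
  have hpsupp : p ∈ supp c := ⟨j0, hne⟩
  haveI : Nonempty (Fin k) := ⟨⟨0, hk⟩⟩
  have hcmem' : ∀ j q, |c j q| ≤ Mb q := hcmem
  set c' : Fin k → EuclideanSpace ℝ (Fin d) :=
    fun j => (WithLp.toLp 2 (fun q => if q = p then 0 else c j q) : EuclideanSpace ℝ (Fin d)) with hc'def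
  have hc'app : ∀ j q, c' j q = if q = p then 0 else c j q := fun j q => rfl
  -- c' is admissible
  have hc'mem : c' ∈ Ck k Mb := by
    intro j q
    rw [hc'app]
    by_cases h : q = p
    · simpa [h] using hMb q
    · simpa [h] using hcmem' j q
  have hsupp' : supp c' ⊆ supp c := by
    rintro q ⟨j, hj⟩
    rw [hc'app] at hj
    by_cases h : q = p
    · simp [h] at hj
    · rw [if_neg h] at hj; exact ⟨j, hj⟩
  have hpnot : p ∉ supp c' := by
    rintro ⟨j, hj⟩
    rw [hc'app, if_pos rfl] at hj
    exact hj rfl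
  -- penalty identity
  have hW : wnormsq w c = wnormsq w c' + w p ^ 2 := by
    have hind : ∀ q, (supp c).indicator (fun r => (w r) ^ 2) q
        = (supp c').indicator (fun r => (w r) ^ 2) q + (if q = p then w p ^ 2 else 0) := by
      intro q
      by_cases h : q = p
      · subst h
        rw [Set.indicator_of_mem hpsupp, Set.indicator_of_notMem hpnot, if_pos rfl]
        ring
      · rw [if_neg h, add_zero]
        by_cases hq : q ∈ supp c'
        · rw [Set.indicator_of_mem hq, Set.indicator_of_mem (hsupp' hq)]
        · have hq2 : q ∉ supp c := by
            rintro ⟨j, hj⟩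
            exact hq ⟨j, by rw [hc'app, if_neg h]; exact hj⟩
          rw [Set.indicator_of_notMem hq, Set.indicator_of_notMem hq2]
    simp only [wnormsq, hind, Finset.sum_add_distrib, Finset.sum_ite_eq', Finset.mem_univ,
      if_true]
  -- bddBelow facts
  have hbddg : ∀ (cc : Fin k → EuclideanSpace ℝ (Fin d)) (x : EuclideanSpace ℝ (Fin d)),
      BddBelow (Set.range fun j => ‖x - cc j‖ ^ 2) := by
    intro cc x; exact ⟨0, by rintro y ⟨j, rfl⟩; positivity⟩
  have hbddq : ∀ x : EuclideanSpace ℝ (Fin d),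
      BddBelow (Set.range fun j => (x p - c j p) ^ 2) := by
    intro x; exact ⟨0, by rintro y ⟨j, rfl⟩; positivity⟩
  -- pointwise key inequality
  have key : ∀ x : EuclideanSpace ℝ (Fin d),
      gammaF c' x ≤ gammaF c x + (x p) ^ 2 - ⨅ j, (x p - c j p) ^ 2 := by
    intro x
    obtain ⟨j₁, hj₁⟩ := Finite.exists_min fun j => ‖x - c j‖ ^ 2
    have hg : gammaF c x = ‖x - c j₁‖ ^ 2 :=
      le_antisymm (ciInf_le (hbddg c x) j₁) (le_ciInf hj₁)
    have h1 : gammaF c' x ≤ ‖x - c' j₁‖ ^ 2 := ciInf_le (hbddg c' x) j₁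
    have h2 : (⨅ j, (x p - c j p) ^ 2) ≤ (x p - c j₁ p) ^ 2 := ciInf_le (hbddq x) j₁
    have h3 : ‖x - c' j₁‖ ^ 2 = ‖x - c j₁‖ ^ 2 + (x p) ^ 2 - (x p - c j₁ p) ^ 2 := by
      rw [normsub_sq', normsub_sq',
        ← Finset.sum_erase_add _ _ (Finset.mem_univ p),
        ← Finset.sum_erase_add _ _ (Finset.mem_univ p)]
      have hcong : ∀ q ∈ Finset.univ.erase p,
          (x q - c' j₁ q) ^ 2 = (x q - c j₁ q) ^ 2 := by
        intro q hq
        rw [hc'app, if_neg (Finset.mem_erase.1 hq).1]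
      rw [Finset.sum_congr rfl hcong, hc'app, if_pos rfl]
      ring
    rw [hg]; linarith
  -- measurability and integrability
  have hboundall : ∀ᵐ x ∂P, ∀ q, |x q| ≤ Mb q := ae_all_iff.2 hbound
  have hint : ∀ (f : EuclideanSpace ℝ (Fin d) → ℝ) (B : ℝ), Measurable f →
      (∀ᵐ x ∂P, ‖f x‖ ≤ B) → Integrable f P := fun f B hm hb =>
    Integrable.mono' (integrable_const B) hm.aestronglyMeasurable hb
  have hmeas_g : ∀ cc : Fin k → EuclideanSpace ℝ (Fin d), Measurable (gammaF cc) := by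
    intro cc
    exact Measurable.iInf fun j => (((continuous_id.sub continuous_const).norm).pow 2).measurable
  have hcont_p : Continuous fun x : EuclideanSpace ℝ (Fin d) => x p :=
    (EuclideanSpace.proj p).continuous
  have hint_g : ∀ cc, cc ∈ Ck k Mb → Integrable (gammaF cc) P := by
    intro cc hcc
    refine hint _ (∑ q, (2 * Mb q) ^ 2) (hmeas_g cc) ?_
    filter_upwards [hboundall] with x hx
    have h0 : (0:ℝ) ≤ gammaF cc x := le_ciInf fun j => by positivity
    rw [Real.norm_eq_abs, abs_of_nonneg h0]
    calc gammaF cc x ≤ ‖x - cc ⟨0, hk⟩‖ ^ 2 := ciInf_le (hbddg cc x) _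
      _ = ∑ q, (x q - cc ⟨0, hk⟩ q) ^ 2 := normsub_sq' _ _
      _ ≤ ∑ q, (2 * Mb q) ^ 2 := by
          refine Finset.sum_le_sum fun q _ => ?_
          have h1 := abs_le.1 (hx q)
          have h2 := abs_le.1 (hcc ⟨0, hk⟩ q)
          exact sq_le_sq' (by linarith) (by linarith)
  have hint_xp : Integrable (fun x : EuclideanSpace ℝ (Fin d) => (x p) ^ 2) P := by
    refine hint _ ((Mb p) ^ 2) (hcont_p.measurable.pow_const 2) ?_
    filter_upwards [hbound p] with x hx
    have h1 := abs_le.1 hx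
    rw [Real.norm_eq_abs, abs_of_nonneg (sq_nonneg _)]
    exact sq_le_sq' (by linarith) (by linarith)
  have hint_q : Integrable (fun x : EuclideanSpace ℝ (Fin d) => ⨅ j, (x p - c j p) ^ 2) P := by
    refine hint _ ((2 * Mb p) ^ 2)
      (Measurable.iInf fun j => ((hcont_p.sub continuous_const).pow 2).measurable) ?_
    filter_upwards [hbound p] with x hx
    have h0 : (0:ℝ) ≤ ⨅ j, (x p - c j p) ^ 2 := le_ciInf fun j => sq_nonneg _
    rw [Real.norm_eq_abs, abs_of_nonneg h0]
    calc (⨅ j, (x p - c j p) ^ 2) ≤ (x p - c ⟨0, hk⟩ p) ^ 2 := ciInf_le (hbddq x) _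
      _ ≤ (2 * Mb p) ^ 2 := by
          have h1 := abs_le.1 hx
          have h2 := abs_le.1 (hcmem' ⟨0, hk⟩ p)
          exact sq_le_sq' (by linarith) (by linarith)
  -- integrate the key inequality
  have hR' : distortion P c' ≤ distortion P c + (∫ x, (x p) ^ 2 ∂P)
      - ∫ x, (⨅ j, (x p - c j p) ^ 2) ∂P := by
    have hint_sum : Integrable (fun x : EuclideanSpace ℝ (Fin d) =>
        gammaF c x + (x p) ^ 2) P := (hint_g c hcmem).add hint_xp
    have hint_tot : Integrable (fun x : EuclideanSpace ℝ (Fin d) =>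
        gammaF c x + (x p) ^ 2 - ⨅ j, (x p - c j p) ^ 2) P := hint_sum.sub hint_q
    have h := integral_mono (hint_g c' hc'mem) hint_tot key
    rwa [integral_sub hint_sum hint_q, integral_add (hint_g c hcmem) hint_xp] at h
  -- Rstar lower bound
  have hRs : Rstar ≤ ∫ x, (⨅ j, (x p - c j p) ^ 2) ∂P := by
    rw [hRstar]
    have hbdd : BddBelow (Set.range fun a : {a : Fin k → ℝ // ∀ j, |a j| ≤ Mb p} =>
        ∫ x, (⨅ j, (x p - a.1 j) ^ 2) ∂P) := by
      refine ⟨0, ?_⟩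
      rintro y ⟨a, rfl⟩
      exact integral_nonneg fun x => le_ciInf fun j => sq_nonneg _
    exact ciInf_le hbdd ⟨fun j => c j p, fun j => hcmem' j p⟩
  -- conclude
  have hfinal := hcmin c' hc'mem (hsupp'.trans hcsupp)
  rw [hW] at hfinal
  have hexp : 8 * κ₀ * lam ^ 2 * (wnormsq w c' + w p ^ 2)
      = 8 * κ₀ * lam ^ 2 * wnormsq w c' + 8 * κ₀ * lam ^ 2 * (w p) ^ 2 := by ring
  rw [hexp] at hfinal
  have heq : 8 * lam ^ 2 * κ₀ * (w p) ^ 2 = 8 * κ₀ * lam ^ 2 * (w p) ^ 2 := by ring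
  linarith

end
end

section
/- Let c, c' ∈ C^k and set c* = c*(c'). Suppose κ₀ > 0 satisfies ‖c'' − c*(c'')‖² ≤ κ₀ ℓ(c'', c*(c'')) for all c'' ∈ C^k and ‖c'' − c*‖² ≤ κ₀ ℓ(c'', c*) whenever S(c'') ⊊ S(c*). If S(c) ⊊ S(c*) or c*(c) = c*, then for every δ > 0 and λ > 0: 2 λ I_w( (c' − c)_{S(c)} ) ≤ (1/δ) ℓ(c, c*) + (1/δ) ℓ(c', c*) + 2 δ κ₀ λ² ‖w_{S(c)}‖². -/
open MeasureTheory ProbabilityTheory Real Matrix Filter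

noncomputable section

lemma coordNorm_eq_norm {d k : ℕ} (c : Fin k → EuclideanSpace ℝ (Fin d)) (p : Fin d) :
    coordNorm c p = ‖(WithLp.equiv 2 (Fin k → ℝ)).symm (fun j => c j p)‖ := by
  rw [EuclideanSpace.norm_eq]
  simp [coordNorm, sq_abs]

lemma coordNorm_nonneg {d k : ℕ} (c : Fin k → EuclideanSpace ℝ (Fin d)) (p : Fin d) :
    0 ≤ coordNorm c p := Real.sqrt_nonneg _

lemma coordNorm_sub_le {d k : ℕ} (x y : Fin k → EuclideanSpace ℝ (Fin d)) (p : Fin d) :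
    coordNorm (x - y) p ≤ coordNorm x p + coordNorm y p := by
  rw [coordNorm_eq_norm, coordNorm_eq_norm, coordNorm_eq_norm]
  have h1 : (fun j => (x - y) j p) = (fun j => x j p) - (fun j => y j p) := rfl
  have h2 : (WithLp.equiv 2 (Fin k → ℝ)).symm ((fun j => x j p) - (fun j => y j p))
      = (WithLp.equiv 2 (Fin k → ℝ)).symm (fun j => x j p)
        - (WithLp.equiv 2 (Fin k → ℝ)).symm (fun j => y j p) := rfl
  rw [h1, h2]
  exact norm_sub_le _ _

lemma sum_coordNorm_sq {d k : ℕ} (x y : Fin k → EuclideanSpace ℝ (Fin d)) :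
    ∑ p, (coordNorm (x - y) p) ^ 2 = distsq x y := by
  have h : ∀ p, (coordNorm (x - y) p) ^ 2 = ∑ j, ((x - y) j p) ^ 2 := by
    intro p
    exact Real.sq_sqrt (Finset.sum_nonneg fun j _ => sq_nonneg _)
  simp_rw [h]
  rw [Finset.sum_comm]
  unfold distsq
  congr 1
  ext j
  rw [PiLp.norm_sq_eq_of_L2]
  simp only [Real.norm_eq_abs, sq_abs]
  rfl

/-- Lemma `lemmevandeGeer`: for codebooks `c, c' ∈ C^k` with
`c* = c*(c')`, if `S(c) ⊊ S(c*)` or `c*(c) = c*`, then for every `δ > 0`,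
`2λ I_{w,1}(c' − c) ≤ (1/δ) ℓ(c,c*) + (1/δ) ℓ(c',c*) + 2δκ₀λ²‖w_{S(c)}‖²`. -/
theorem sparsity_lemma_vandeGeer
    (d k : ℕ) (hd : 0 < d) (hk : 0 < k)
    (P : Measure (EuclideanSpace ℝ (Fin d))) [IsProbabilityMeasure P]
    (Mb : Fin d → ℝ) (hMb : ∀ p, 0 ≤ Mb p)
    (hbound : ∀ p : Fin d, ∀ᵐ x ∂P, |x p| ≤ Mb p)
    -- deterministic weights
    (w : Fin d → ℝ) (hwpos : ∀ p, 0 < w p)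
    -- `𝓜` is nonempty, and `c*(·)` selects a closest optimal codebook
    (hMne : (optSet P k).Nonempty)
    (proj : (Fin k → EuclideanSpace ℝ (Fin d)) → (Fin k → EuclideanSpace ℝ (Fin d)))
    (hproj : ∀ c, proj c ∈ optSet P k ∧
      ∀ cs ∈ optSet P k, distsq c (proj c) ≤ distsq c cs)
    -- the margin-type constant `κ₀`
    (κ₀ : ℝ) (hκ₀pos : 0 < κ₀)
    (hκa : ∀ c'' ∈ Ck k Mb,
      distsq c'' (proj c'') ≤ κ₀ * (distortion P c'' - distortion P (proj c'')))
    -- the codebooks `c, c'` and `c* = c*(c')`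
    (c c' : Fin k → EuclideanSpace ℝ (Fin d))
    (hc : c ∈ Ck k Mb) (hc' : c' ∈ Ck k Mb)
    (cs : Fin k → EuclideanSpace ℝ (Fin d)) (hcs : cs = proj c')
    (hκb : ∀ c'' ∈ Ck k Mb, supp c'' ⊂ supp cs →
      distsq c'' cs ≤ κ₀ * (distortion P c'' - distortion P cs))
    -- the dichotomy `S(c) ⊊ S(c*)` or `c*(c) = c*`
    (hcase : supp c ⊂ supp cs ∨ proj c = cs)
    (δ lam : ℝ) (hδ : 0 < δ) (hlam : 0 < lam) :
    2 * lam * (∑ p, (supp c).indicator (fun q => w q * coordNorm (c' - c) q) p)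
      ≤ (1 / δ) * (distortion P c - distortion P cs)
        + (1 / δ) * (distortion P c' - distortion P cs)
        + 2 * δ * κ₀ * lam ^ 2 * wnormsq w c := by
  have hδκ : 0 < δ * κ₀ := mul_pos hδ hκ₀pos
  have hκc : distsq c cs ≤ κ₀ * (distortion P c - distortion P cs) := by
    rcases hcase with h | h
    · exact hκb c hc h
    · have := hκa c hc; rwa [h] at this
  have hκc' : distsq c' cs ≤ κ₀ * (distortion P c' - distortion P cs) := by
    have := hκa c' hc'; rwa [← hcs] at this
  set A : Fin d → ℝ := fun p => coordNorm (c - cs) p with hA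
  set B : Fin d → ℝ := fun p => coordNorm (c' - cs) p with hB
  -- pointwise bound on the indicator terms
  have key : ∀ p, 2 * lam * (supp c).indicator (fun q => w q * coordNorm (c' - c) q) p
      ≤ (supp c).indicator (fun q => (1/(δ*κ₀)) * (A q)^2) p
        + (supp c).indicator (fun q => (1/(δ*κ₀)) * (B q)^2) p
        + (supp c).indicator (fun q => 2*δ*κ₀*lam^2 * (w q)^2) p := by
    intro p
    by_cases hp : p ∈ supp c
    · rw [Set.indicator_of_mem hp, Set.indicator_of_mem hp, Set.indicator_of_mem hp,
        Set.indicator_of_mem hp]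
      have htri : coordNorm (c' - c) p ≤ B p + A p := by
        have : c' - c = (c' - cs) - (c - cs) := by abel
        rw [this]
        exact coordNorm_sub_le _ _ _
      have hwp := hwpos p
      have hA0 : 0 ≤ A p := coordNorm_nonneg _ _
      have hB0 : 0 ≤ B p := coordNorm_nonneg _ _
      have e1 : (1/(δ*κ₀)) * (A p)^2 + δ*κ₀*lam^2*(w p)^2 - 2*lam*(w p * A p)
          = (1/(δ*κ₀)) * (A p - δ*κ₀*lam*(w p))^2 := by
        field_simp; ring
      have e2 : (1/(δ*κ₀)) * (B p)^2 + δ*κ₀*lam^2*(w p)^2 - 2*lam*(w p * B p)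
          = (1/(δ*κ₀)) * (B p - δ*κ₀*lam*(w p))^2 := by
        field_simp; ring
      have p1 : 0 ≤ (1/(δ*κ₀)) * (A p - δ*κ₀*lam*(w p))^2 := by positivity
      have p2 : 0 ≤ (1/(δ*κ₀)) * (B p - δ*κ₀*lam*(w p))^2 := by positivity
      have hmono : 2 * lam * (w p * coordNorm (c' - c) p)
          ≤ 2 * lam * (w p * (B p + A p)) := by
        have : w p * coordNorm (c' - c) p ≤ w p * (B p + A p) :=
          mul_le_mul_of_nonneg_left htri (le_of_lt hwp)
        nlinarith
      nlinarith [e1, e2, p1, p2]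
    · rw [Set.indicator_of_notMem hp, Set.indicator_of_notMem hp,
        Set.indicator_of_notMem hp, Set.indicator_of_notMem hp]
      simp
  have hsum : 2 * lam * (∑ p, (supp c).indicator (fun q => w q * coordNorm (c' - c) q) p)
      ≤ (∑ p, (supp c).indicator (fun q => (1/(δ*κ₀)) * (A q)^2) p)
        + (∑ p, (supp c).indicator (fun q => (1/(δ*κ₀)) * (B q)^2) p)
        + (∑ p, (supp c).indicator (fun q => 2*δ*κ₀*lam^2 * (w q)^2) p) := by
    rw [Finset.mul_sum]
    calc ∑ p, 2 * lam * (supp c).indicator (fun q => w q * coordNorm (c' - c) q) p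
        ≤ ∑ p, ((supp c).indicator (fun q => (1/(δ*κ₀)) * (A q)^2) p
          + (supp c).indicator (fun q => (1/(δ*κ₀)) * (B q)^2) p
          + (supp c).indicator (fun q => 2*δ*κ₀*lam^2 * (w q)^2) p) :=
        Finset.sum_le_sum fun p _ => key p
      _ = _ := by rw [Finset.sum_add_distrib, Finset.sum_add_distrib]
  refine hsum.trans ?_
  -- bound each of the three sums
  have b1 : (∑ p, (supp c).indicator (fun q => (1/(δ*κ₀)) * (A q)^2) p)
      ≤ (1 / δ) * (distortion P c - distortion P cs) := by
    have h1 : (∑ p, (supp c).indicator (fun q => (1/(δ*κ₀)) * (A q)^2) p)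
        ≤ ∑ p, (1/(δ*κ₀)) * (A p)^2 := by
      refine Finset.sum_le_sum fun p _ => ?_
      exact Set.indicator_le_self' (fun q _ => by positivity) p
    have h2 : ∑ p, (1/(δ*κ₀)) * (A p)^2 = (1/(δ*κ₀)) * distsq c cs := by
      rw [← Finset.mul_sum, sum_coordNorm_sq]
    rw [h2] at h1
    refine h1.trans ?_
    rw [div_mul_eq_mul_div, one_mul, div_le_iff₀ hδκ] at *
    calc distsq c cs ≤ κ₀ * (distortion P c - distortion P cs) := hκc
      _ = 1 / δ * (distortion P c - distortion P cs) * (δ * κ₀) := by field_simp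
  have b2 : (∑ p, (supp c).indicator (fun q => (1/(δ*κ₀)) * (B q)^2) p)
      ≤ (1 / δ) * (distortion P c' - distortion P cs) := by
    have h1 : (∑ p, (supp c).indicator (fun q => (1/(δ*κ₀)) * (B q)^2) p)
        ≤ ∑ p, (1/(δ*κ₀)) * (B p)^2 := by
      refine Finset.sum_le_sum fun p _ => ?_
      exact Set.indicator_le_self' (fun q _ => by positivity) p
    have h2 : ∑ p, (1/(δ*κ₀)) * (B p)^2 = (1/(δ*κ₀)) * distsq c' cs := by
      rw [← Finset.mul_sum, sum_coordNorm_sq]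
    rw [h2] at h1
    refine h1.trans ?_
    rw [div_mul_eq_mul_div, one_mul, div_le_iff₀ hδκ] at *
    calc distsq c' cs ≤ κ₀ * (distortion P c' - distortion P cs) := hκc'
      _ = 1 / δ * (distortion P c' - distortion P cs) * (δ * κ₀) := by field_simp
  have b3 : (∑ p, (supp c).indicator (fun q => 2*δ*κ₀*lam^2 * (w q)^2) p)
      = 2 * δ * κ₀ * lam ^ 2 * wnormsq w c := by
    unfold wnormsq
    rw [Finset.mul_sum]
    congr 1
    ext p
    rw [Set.indicator_const_mul]
  linarith


end
end

section
/- For the quasi-Gaussian mixture P with k components, let m = (m_1,…,m_k) be the codebook of the component means and η = max_{1≤i≤k}(1 − N_i). Then the distortion satisfies R(m) ≤ σ² k θ_max d / (1 − η). -/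
open MeasureTheory ProbabilityTheory Real Matrix Filter

noncomputable section

/-- (Untruncated) Gaussian density with mean `m` and covariance matrix `S`. -/
def gaussDensity {d : ℕ} (m : EuclideanSpace ℝ (Fin d))
    (S : Matrix (Fin d) (Fin d) ℝ) (x : EuclideanSpace ℝ (Fin d)) : ℝ :=
  (1 / ((2 * π) ^ ((d : ℝ) / 2) * Real.sqrt S.det)) *
    Real.exp (-((fun i => x i - m i) ⬝ᵥ (S⁻¹ *ᵥ fun i => x i - m i)) / 2)

/-- Density of the quasi-Gaussian mixture, truncated to the ball `B(0, M)`;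
`N i` is the normalization constant of the i-th truncated component. -/
def mixDensity {d k : ℕ} (θ N : Fin k → ℝ) (m : Fin k → EuclideanSpace ℝ (Fin d))
    (Cov : Fin k → Matrix (Fin d) (Fin d) ℝ) (M : ℝ) : EuclideanSpace ℝ (Fin d) → ℝ :=
  (Metric.closedBall (0 : EuclideanSpace ℝ (Fin d)) M).indicator
    (fun x => ∑ i, (θ i / N i) * gaussDensity (m i) (Cov i) x)


lemma integral_exp_negsq_half : ∫ t : ℝ, Real.exp (-t ^ 2 / 2) = Real.sqrt (2 * π) := by
  have h := integral_gaussian (1/2 : ℝ)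
  simp only [show ∀ t:ℝ, -(1/2 : ℝ) * t^2 = -t^2/2 from fun t => by ring] at h
  rw [h]
  rw [show π / (1/2) = 2 * π by ring]

lemma integral_sq_exp_negsq_half :
    ∫ t : ℝ, t ^ 2 * Real.exp (-t ^ 2 / 2) = Real.sqrt (2 * π) := by
  have key : (fun t : ℝ => t ^ 2 * Real.exp (-t ^ 2 / 2))
      = fun t : ℝ => (fun s : ℝ => s ^ 2 * Real.exp (-s ^ 2 / 2)) |t| :=
    funext fun t => by simp [sq_abs]
  rw [key, integral_comp_abs (f := fun s : ℝ => s ^ 2 * Real.exp (-s ^ 2 / 2))]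
  have h2 : ∀ x ∈ Set.Ioi (0:ℝ), x ^ 2 * Real.exp (-x ^ 2 / 2) = x ^ (2:ℝ) * Real.exp (-(1/2) * x ^ (2:ℝ)) := by
    intro x hx
    rw [Real.rpow_two]
    ring_nf
  rw [setIntegral_congr_fun measurableSet_Ioi h2,
    integral_rpow_mul_exp_neg_mul_rpow (by norm_num) (by norm_num) (by norm_num)]
  have hg : Real.Gamma ((2 + 1) / 2) = Real.sqrt π / 2 := by
    rw [show ((2:ℝ) + 1)/2 = 1/2 + 1 by norm_num, Real.Gamma_add_one (by norm_num),
      Real.Gamma_one_half_eq]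
    ring
  rw [hg]
  have hb : ((1:ℝ)/2) ^ (-((2:ℝ) + 1) / 2) = 2 * Real.sqrt 2 := by
    rw [show -((2:ℝ)+1)/2 = -(3/2) by norm_num, one_div, Real.inv_rpow (by norm_num),
      ← Real.rpow_neg (by norm_num), neg_neg, show (3/2 : ℝ) = 1 + 1/2 by norm_num,
      Real.rpow_add (by norm_num), Real.rpow_one, ← Real.sqrt_eq_rpow]
  rw [hb, Real.sqrt_mul (by norm_num)]
  ring


lemma integrable_exp_negsq_half : Integrable (fun t : ℝ => Real.exp (-t ^ 2 / 2)) := by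
  exact (integrable_exp_neg_mul_sq (show (0:ℝ) < 1/2 by norm_num)).congr
    (ae_of_all _ fun t => by simp only []; rw [show -(1/2 : ℝ) * t ^ 2 = -t ^ 2 / 2 from by ring])

lemma integrable_sq_exp_negsq_half :
    Integrable (fun t : ℝ => t ^ 2 * Real.exp (-t ^ 2 / 2)) := by
  exact (integrable_rpow_mul_exp_neg_mul_sq (show (0:ℝ) < 1/2 by norm_num)
    (show (-1:ℝ) < 2 by norm_num)).congr (ae_of_all _ fun t => by
      simp only []
      rw [Real.rpow_two, show -(1/2 : ℝ) * t ^ 2 = -t ^ 2 / 2 from by ring])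

lemma lintegral_sq_gauss (d : ℕ) :
    ∫⁻ v : (Fin d → ℝ), ENNReal.ofReal ((∑ i, v i ^ 2) * Real.exp (-(∑ i, v i ^ 2) / 2))
      = ENNReal.ofReal (d * Real.sqrt (2 * π) ^ d) := by
  set f : Fin d → Fin d → ℝ → ℝ :=
    fun p q t => (if q = p then t ^ 2 else 1) * Real.exp (-t ^ 2 / 2) with hf
  have hfint : ∀ p q, Integrable (f p q) := by
    intro p q
    by_cases h : q = p <;> simp [hf, h, integrable_sq_exp_negsq_half, integrable_exp_negsq_half]
  have hfnonneg : ∀ p q t, 0 ≤ f p q t := by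
    intro p q t
    apply mul_nonneg _ (Real.exp_nonneg _)
    by_cases h : q = p <;> simp [h, sq_nonneg]
  have hfi : ∀ p q, ∫ t, f p q t = Real.sqrt (2 * π) := by
    intro p q
    by_cases h : q = p <;>
      simp [hf, h, integral_sq_exp_negsq_half, integral_exp_negsq_half]
  have hrw : ∀ v : Fin d → ℝ,
      (∑ i, v i ^ 2) * Real.exp (-(∑ i, v i ^ 2) / 2) = ∑ p, ∏ q, f p q (v q) := by
    intro v
    have hprod : ∀ p : Fin d, (∏ q, f p q (v q))
        = v p ^ 2 * Real.exp (-(∑ i, v i ^ 2) / 2) := by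
      intro p
      rw [hf]
      simp only
      rw [Finset.prod_mul_distrib, Finset.prod_ite_eq' Finset.univ p (fun q => v q ^ 2)]
      simp only [Finset.mem_univ, if_true]
      rw [← Real.exp_sum]
      congr 1
      rw [← Finset.sum_div, ← Finset.sum_neg_distrib]
    simp_rw [hprod, ← Finset.sum_mul]
  simp_rw [hrw]
  have hint : Integrable (fun v : Fin d → ℝ => ∑ p, ∏ q, f p q (v q)) :=
    integrable_finset_sum _ fun p _ => Integrable.fintype_prod (f := fun q => f p q)
      (fun q => hfint p q)
  rw [← ofReal_integral_eq_lintegral_ofReal hint (ae_of_all _ fun v => by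
    exact Finset.sum_nonneg fun p _ => Finset.prod_nonneg fun q _ => hfnonneg p q (v q))]
  congr 1
  rw [integral_finset_sum (μ := volume) _ fun p _ => Integrable.fintype_prod (f := fun q => f p q)
      (fun q => hfint p q)]
  have : ∀ p : Fin d, ∫ v : Fin d → ℝ, ∏ q, f p q (v q) = Real.sqrt (2 * π) ^ d := by
    intro p
    rw [volume_pi, integral_fintype_prod_eq_prod (𝕜 := ℝ) (ι := Fin d) (fun q => f p q)]
    simp [hfi]
  simp [this, Finset.sum_const, mul_comm]


open scoped MatrixOrder in
lemma gauss_moment_le {d : ℕ} (m : EuclideanSpace ℝ (Fin d)) (S : Matrix (Fin d) (Fin d) ℝ)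
    (hS : S.PosDef) {σ : ℝ} (hσ : 0 < σ)
    (hup : ∀ v : Fin d → ℝ, v ⬝ᵥ (S *ᵥ v) ≤ σ ^ 2 * (v ⬝ᵥ v)) :
    ∫⁻ x : EuclideanSpace ℝ (Fin d), ENNReal.ofReal (‖x - m‖ ^ 2 * gaussDensity m S x)
      ≤ ENNReal.ofReal (σ ^ 2 * d) := by
  have hdetS : 0 < S.det := hS.det_pos
  set c : ℝ := 1 / ((2 * π) ^ ((d : ℝ) / 2) * Real.sqrt S.det) with hc
  have h2pi : (0:ℝ) < (2 * π) ^ ((d : ℝ) / 2) := Real.rpow_pos_of_pos (by positivity) _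
  have hcpos : 0 < c := by
    rw [hc]; positivity
  -- the core function on the pi type
  set g0 : (Fin d → ℝ) → ENNReal := fun v =>
    ENNReal.ofReal ((∑ i, v i ^ 2) * (c * Real.exp (-(v ⬝ᵥ (S⁻¹ *ᵥ v)) / 2))) with hg0
  have hg0m : Measurable g0 := by
    apply Measurable.ennreal_ofReal
    apply Measurable.mul
    · exact Finset.measurable_sum _ fun i _ => ((measurable_pi_apply i).pow_const 2)
    · apply Measurable.const_mul
      apply Measurable.exp
      apply Measurable.div_const
      apply Measurable.neg
      unfold dotProduct Matrix.mulVec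
      exact Finset.measurable_sum _ fun i _ => (measurable_pi_apply i).mul
        (Finset.measurable_sum _ fun j _ => (measurable_const.mul (measurable_pi_apply j)))
  -- Step 1: move to the pi type and translate
  have step1 : ∫⁻ x : EuclideanSpace ℝ (Fin d),
      ENNReal.ofReal (‖x - m‖ ^ 2 * gaussDensity m S x) = ∫⁻ v : Fin d → ℝ, g0 v := by
    have he := EuclideanSpace.volume_preserving_symm_measurableEquiv_toLp (Fin d)
    have hm : Measurable fun v : Fin d → ℝ => g0 (v - fun i => m i) :=
      hg0m.comp (measurable_id.sub measurable_const)
    have h1 : ∫⁻ x : EuclideanSpace ℝ (Fin d),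
        ENNReal.ofReal (‖x - m‖ ^ 2 * gaussDensity m S x)
        = ∫⁻ x : EuclideanSpace ℝ (Fin d),
            (fun v : Fin d → ℝ => g0 (v - fun i => m i))
              ((MeasurableEquiv.toLp 2 (Fin d → ℝ)).symm x) := by
      apply lintegral_congr
      intro x
      simp only []
      congr 1
      have hnorm : ‖x - m‖ ^ 2 = ∑ i, (x i - m i) ^ 2 := by
        rw [EuclideanSpace.norm_eq, Real.sq_sqrt (Finset.sum_nonneg fun i _ => sq_nonneg _)]
        simp [sq_abs]
      have hco : ((MeasurableEquiv.toLp 2 (Fin d → ℝ)).symm x - fun i => m i)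
          = fun i => x i - m i := by
        funext i
        rfl
      rw [hco, hnorm, gaussDensity]
    rw [h1, he.lintegral_comp hm]
    exact lintegral_sub_right_eq_self g0 _
  rw [step1]
  -- Step 2: linear change of variables with the square root of S
  have hps := hS.posSemidef
  set A : Matrix (Fin d) (Fin d) ℝ := CFC.sqrt S with hA
  have hAA : A * A = S := CFC.sqrt_mul_sqrt_self S hps.nonneg
  have hAt : Aᵀ = A := by
    have := (CFC.sqrt_nonneg S).posSemidef.isHermitian
    rwa [Matrix.IsHermitian, Matrix.conjTranspose_eq_transpose_of_trivial] at this
  have hdet2 : A.det * A.det = S.det := by rw [← Matrix.det_mul, hAA]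
  have hdetA : A.det ≠ 0 := by
    intro h
    rw [h, mul_zero] at hdet2
    exact hdetS.ne hdet2
  have habs : |A.det| = Real.sqrt S.det := by
    rw [← hdet2, Real.sqrt_mul_self_eq_abs]
  have hSt : Sᵀ = S := by
    have := hS.isHermitian
    rwa [Matrix.IsHermitian, Matrix.conjTranspose_eq_transpose_of_trivial] at this
  have hSinv : A * (S⁻¹ * A) = 1 := by
    rw [← hAA, Matrix.mul_inv_rev, ← Matrix.mul_assoc, ← Matrix.mul_assoc,
      Matrix.mul_nonsing_inv _ (isUnit_iff_ne_zero.mpr hdetA), Matrix.one_mul, Matrix.nonsing_inv_mul _ (isUnit_iff_ne_zero.mpr hdetA)]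
  have key1 : ∀ v : Fin d → ℝ, (A *ᵥ v) ⬝ᵥ (S⁻¹ *ᵥ (A *ᵥ v)) = v ⬝ᵥ v := by
    intro v
    rw [Matrix.mulVec_mulVec, Matrix.dotProduct_mulVec, Matrix.vecMul_mulVec, hAt, hSinv,
      Matrix.vecMul_one]
  have key2 : ∀ v : Fin d → ℝ, ∑ i, (A *ᵥ v) i ^ 2 = v ⬝ᵥ (S *ᵥ v) := by
    intro v
    have h1 : ∑ i, (A *ᵥ v) i ^ 2 = (A *ᵥ v) ⬝ᵥ (A *ᵥ v) := by
      simp [dotProduct, sq]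
    rw [h1, Matrix.dotProduct_mulVec, Matrix.vecMul_mulVec, hAt, hAA]
    rw [show v ᵥ* S = S *ᵥ v from by rw [← Matrix.vecMul_transpose, hSt],
      dotProduct_comm]
  -- the linear map
  set T : (Fin d → ℝ) →ₗ[ℝ] (Fin d → ℝ) := Matrix.toLin' A with hT
  have hTdet : LinearMap.det T = A.det := by rw [hT, LinearMap.det_toLin']
  have hTcont : Continuous T := T.continuous_of_finiteDimensional
  have hmap : Measure.map T volume = ENNReal.ofReal |A.det⁻¹| • volume := by
    rw [← hTdet]
    exact Measure.map_linearMap_addHaar_pi_eq_smul_addHaar (by rw [hTdet]; exact hdetA) volume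
  have hvol : (volume : Measure (Fin d → ℝ))
      = ENNReal.ofReal |A.det| • Measure.map T volume := by
    rw [hmap, smul_smul, ← ENNReal.ofReal_mul (abs_nonneg _), abs_inv,
      mul_inv_cancel₀ (abs_ne_zero.mpr hdetA), ENNReal.ofReal_one, one_smul]
  have step2 : ∫⁻ v : Fin d → ℝ, g0 v
      = ENNReal.ofReal |A.det| * ∫⁻ v : Fin d → ℝ, g0 (T v) := by
    conv_lhs => rw [hvol]
    rw [lintegral_smul_measure, lintegral_map hg0m hTcont.measurable, smul_eq_mul]
  rw [step2]
  -- Step 3: pointwise bound after substitution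
  have step3 : ∀ v : Fin d → ℝ,
      g0 (T v) ≤ ENNReal.ofReal (σ ^ 2)
        * ENNReal.ofReal ((∑ i, v i ^ 2) * (c * Real.exp (-(∑ i, v i ^ 2) / 2))) := by
    intro v
    rw [hg0]
    simp only []
    rw [← ENNReal.ofReal_mul (sq_nonneg σ)]
    apply ENNReal.ofReal_le_ofReal
    have hTv : T v = A *ᵥ v := Matrix.toLin'_apply A v
    rw [hTv, key1 v, key2 v]
    have hvv : v ⬝ᵥ v = ∑ i, v i ^ 2 := by simp [dotProduct, sq]
    rw [hvv]
    have hb := hup v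
    rw [hvv] at hb
    calc v ⬝ᵥ (S *ᵥ v) * (c * Real.exp (-(∑ i, v i ^ 2) / 2))
        ≤ σ ^ 2 * (∑ i, v i ^ 2) * (c * Real.exp (-(∑ i, v i ^ 2) / 2)) := by
          apply mul_le_mul_of_nonneg_right hb
          positivity
      _ = σ ^ 2 * ((∑ i, v i ^ 2) * (c * Real.exp (-(∑ i, v i ^ 2) / 2))) := by ring
  -- Step 4: conclude with the explicit Gaussian integral
  have hmeas2 : Measurable fun v : Fin d → ℝ =>
      ENNReal.ofReal ((∑ i, v i ^ 2) * (c * Real.exp (-(∑ i, v i ^ 2) / 2))) := by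
    apply Measurable.ennreal_ofReal
    have hs : Measurable fun v : Fin d → ℝ => ∑ i, v i ^ 2 :=
      Finset.measurable_sum _ fun i _ => ((measurable_pi_apply i).pow_const 2)
    exact hs.mul ((((hs.neg).div_const 2).exp).const_mul c)
  have step4 : ∫⁻ v : Fin d → ℝ, g0 (T v)
      ≤ ENNReal.ofReal (σ ^ 2) * (ENNReal.ofReal c
          * ENNReal.ofReal (d * Real.sqrt (2 * π) ^ d)) := by
    calc ∫⁻ v : Fin d → ℝ, g0 (T v)
        ≤ ∫⁻ v : Fin d → ℝ, ENNReal.ofReal (σ ^ 2)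
            * ENNReal.ofReal ((∑ i, v i ^ 2) * (c * Real.exp (-(∑ i, v i ^ 2) / 2))) :=
          lintegral_mono step3
      _ = ENNReal.ofReal (σ ^ 2) * ∫⁻ v : Fin d → ℝ,
            ENNReal.ofReal ((∑ i, v i ^ 2) * (c * Real.exp (-(∑ i, v i ^ 2) / 2))) :=
          lintegral_const_mul _ hmeas2
      _ = ENNReal.ofReal (σ ^ 2) * (ENNReal.ofReal c
            * ENNReal.ofReal (d * Real.sqrt (2 * π) ^ d)) := by
          congr 1
          rw [← lintegral_sq_gauss d, ← lintegral_const_mul _ (by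
            apply Measurable.ennreal_ofReal
            have hs : Measurable fun v : Fin d → ℝ => ∑ i, v i ^ 2 :=
              Finset.measurable_sum _ fun i _ => ((measurable_pi_apply i).pow_const 2)
            exact hs.mul (((hs.neg).div_const 2).exp))]
          apply lintegral_congr
          intro v
          rw [← ENNReal.ofReal_mul hcpos.le]
          congr 1
          ring
  calc ENNReal.ofReal |A.det| * ∫⁻ v : Fin d → ℝ, g0 (T v)
      ≤ ENNReal.ofReal |A.det| * (ENNReal.ofReal (σ ^ 2) * (ENNReal.ofReal c
          * ENNReal.ofReal (d * Real.sqrt (2 * π) ^ d))) :=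
        mul_le_mul_right step4 _
    _ = ENNReal.ofReal (|A.det| * (σ ^ 2 * (c * (d * Real.sqrt (2 * π) ^ d)))) := by
        rw [← ENNReal.ofReal_mul hcpos.le, ← ENNReal.ofReal_mul (sq_nonneg σ),
          ← ENNReal.ofReal_mul (abs_nonneg _)]
    _ = ENNReal.ofReal (σ ^ 2 * d) := by
        congr 1
        rw [habs, hc]
        have hsq : Real.sqrt (2 * π) ^ d = (2 * π) ^ ((d : ℝ) / 2) := by
          rw [Real.sqrt_eq_rpow, ← Real.rpow_natCast ((2 * π) ^ ((1:ℝ)/2)) d,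
            ← Real.rpow_mul (by positivity)]
          congr 1
          ring
        rw [hsq]
        have hd0 : Real.sqrt S.det ≠ 0 := by positivity
        field_simp

/-- inequality `meansrisk` of Lemma `Gaussiancalculus`: for the
quasi-Gaussian mixture, `R(m) ≤ σ² k θ_max d / (1 − η)`. -/
theorem quasi_gaussian_means_risk
    (d k : ℕ) (hd : 0 < d) (hk : 0 < k)
    -- mixture weights and distinct means
    (θ : Fin k → ℝ) (hθpos : ∀ i, 0 < θ i) (hθsum : ∑ i, θ i = 1)
    (m : Fin k → EuclideanSpace ℝ (Fin d)) (hmdist : ∀ i j, i ≠ j → m i ≠ m j)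
    (M : ℝ) (hM : ∀ j, 2 * ‖m j‖ ≤ M)
    -- covariances with largest eigenvalue at most `σ²`
    (σ : ℝ) (hσ : 0 < σ)
    (Cov : Fin k → Matrix (Fin d) (Fin d) ℝ) (hpd : ∀ i, (Cov i).PosDef)
    (hup : ∀ i (v : Fin d → ℝ), v ⬝ᵥ (Cov i *ᵥ v) ≤ σ ^ 2 * (v ⬝ᵥ v))
    -- normalization constants and `η = max_i (1 − N_i)`
    (N : Fin k → ℝ) (hNpos : ∀ i, 0 < N i)
    (hN : ∀ i, N i = ∫ x in Metric.closedBall (0 : EuclideanSpace ℝ (Fin d)) M,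
      gaussDensity (m i) (Cov i) x)
    (η : ℝ) (hη : η = ⨆ i, (1 - N i)) (hηlt : η < 1)
    -- `θ_max = max_i θ_i`
    (θmax : ℝ) (hθmax : θmax = ⨆ i, θ i)
    -- the quasi-Gaussian mixture `P`
    (P : Measure (EuclideanSpace ℝ (Fin d))) [IsProbabilityMeasure P]
    (hP : P = volume.withDensity (fun x => ENNReal.ofReal (mixDensity θ N m Cov M x))) :
    distortion P m ≤ σ ^ 2 * k * θmax * d / (1 - η) := by
  classical
  have i0 : Fin k := ⟨0, hk⟩
  have hbddθ : BddAbove (Set.range θ) := Set.Finite.bddAbove (Set.finite_range θ)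
  have hθle : ∀ i, θ i ≤ θmax := fun i => by rw [hθmax]; exact le_ciSup hbddθ i
  have hθmaxpos : 0 < θmax := lt_of_lt_of_le (hθpos i0) (hθle i0)
  have h1η : (0:ℝ) < 1 - η := by linarith
  have hNge : ∀ i, 1 - η ≤ N i := by
    intro i
    have : 1 - N i ≤ η := by
      rw [hη]
      exact le_ciSup (Set.Finite.bddAbove (Set.finite_range fun i => 1 - N i)) i
    linarith
  have hratio : ∀ i, θ i / N i ≤ θmax / (1 - η) := fun i =>
    div_le_div₀ hθmaxpos.le (hθle i) h1η (hNge i)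
  -- basic properties of the Gaussian densities
  have hgd_nonneg : ∀ i x, 0 ≤ gaussDensity (m i) (Cov i) x := by
    intro i x
    apply mul_nonneg _ (Real.exp_nonneg _)
    have := (hpd i).det_pos
    positivity
  have hcoord : ∀ (j : Fin d), Measurable fun x : EuclideanSpace ℝ (Fin d) => x j := by
    intro j
    exact (measurable_pi_apply j).comp
      (MeasurableEquiv.toLp 2 (Fin d → ℝ)).symm.measurable
  have hgd_meas : ∀ i, Measurable (gaussDensity (m i) (Cov i)) := by
    intro i
    apply Measurable.const_mul
    apply Measurable.exp
    apply Measurable.div_const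
    apply Measurable.neg
    unfold dotProduct Matrix.mulVec
    exact Finset.measurable_sum _ fun p _ => ((hcoord p).sub_const _).mul
      (Finset.measurable_sum _ fun q _ =>
        (measurable_const.mul ((hcoord q).sub_const _)))
  -- properties of `gammaF`
  have hγ_nonneg : ∀ x, 0 ≤ gammaF m x := fun x => Real.iInf_nonneg fun j => sq_nonneg _
  have hγ_meas : Measurable (gammaF m) := by
    apply Measurable.iInf
    intro j
    exact ((continuous_id.sub continuous_const).norm.pow 2).measurable
  have hγ_le : ∀ (x) (i : Fin k), gammaF m x ≤ ‖x - m i‖ ^ 2 := by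
    intro x i
    apply ciInf_le
    refine ⟨0, ?_⟩
    rintro y ⟨j, rfl⟩
    exact sq_nonneg _
  -- mixture density
  have hmix_meas : Measurable (mixDensity θ N m Cov M) :=
    Measurable.indicator
      (Finset.measurable_sum _ fun i _ => (hgd_meas i).const_mul _)
      measurableSet_closedBall
  have hmix_le : ∀ x, mixDensity θ N m Cov M x
      ≤ ∑ i, (θ i / N i) * gaussDensity (m i) (Cov i) x := by
    intro x
    refine Set.indicator_le_self' (fun y _ => ?_) x
    exact Finset.sum_nonneg fun i _ =>
      mul_nonneg (div_nonneg (hθpos i).le (hNpos i).le) (hgd_nonneg i y)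
  have hmix_nonneg : ∀ x, 0 ≤ mixDensity θ N m Cov M x := by
    intro x
    apply Set.indicator_nonneg
    intro y _
    exact Finset.sum_nonneg fun i _ =>
      mul_nonneg (div_nonneg (hθpos i).le (hNpos i).le) (hgd_nonneg i y)
  have hRHSnn : (0:ℝ) ≤ σ ^ 2 * k * θmax * d / (1 - η) :=
    div_nonneg (by positivity) h1η.le
  -- expressing the distortion as a lower Lebesgue integral
  rw [distortion, integral_eq_lintegral_of_nonneg_ae (ae_of_all _ hγ_nonneg)
    hγ_meas.aestronglyMeasurable]
  apply ENNReal.toReal_le_of_le_ofReal hRHSnn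
  rw [hP, lintegral_withDensity_eq_lintegral_mul _ hmix_meas.ennreal_ofReal
    hγ_meas.ennreal_ofReal]
  -- pointwise bound by the (untruncated) Gaussian second moments
  have hpt : ∀ x : EuclideanSpace ℝ (Fin d),
      ((fun x => ENNReal.ofReal (mixDensity θ N m Cov M x))
          * fun x => ENNReal.ofReal (gammaF m x)) x
        ≤ ∑ i, ENNReal.ofReal (θ i / N i)
            * ENNReal.ofReal (‖x - m i‖ ^ 2 * gaussDensity (m i) (Cov i) x) := by
    intro x
    simp only [Pi.mul_apply]
    calc ENNReal.ofReal (mixDensity θ N m Cov M x) * ENNReal.ofReal (gammaF m x)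
        ≤ ENNReal.ofReal (∑ i, (θ i / N i) * gaussDensity (m i) (Cov i) x)
            * ENNReal.ofReal (gammaF m x) :=
          mul_le_mul_left (ENNReal.ofReal_le_ofReal (hmix_le x)) _
      _ = (∑ i, ENNReal.ofReal ((θ i / N i) * gaussDensity (m i) (Cov i) x))
            * ENNReal.ofReal (gammaF m x) := by
          rw [ENNReal.ofReal_sum_of_nonneg]
          intro i _
          exact mul_nonneg (div_nonneg (hθpos i).le (hNpos i).le) (hgd_nonneg i x)
      _ = ∑ i, ENNReal.ofReal ((θ i / N i) * gaussDensity (m i) (Cov i) x)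
            * ENNReal.ofReal (gammaF m x) := Finset.sum_mul _ _ _
      _ ≤ ∑ i, ENNReal.ofReal (θ i / N i)
            * ENNReal.ofReal (‖x - m i‖ ^ 2 * gaussDensity (m i) (Cov i) x) := by
          apply Finset.sum_le_sum
          intro i _
          rw [ENNReal.ofReal_mul (div_nonneg (hθpos i).le (hNpos i).le), mul_assoc,
            mul_comm (‖x - m i‖ ^ 2), ENNReal.ofReal_mul (hgd_nonneg i x)]
          exact mul_le_mul_right (mul_le_mul_right
            (ENNReal.ofReal_le_ofReal (hγ_le x i)) _) _
  have hterm_meas : ∀ i : Fin k, Measurable fun x : EuclideanSpace ℝ (Fin d) =>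
      ENNReal.ofReal (‖x - m i‖ ^ 2 * gaussDensity (m i) (Cov i) x) := by
    intro i
    exact (((continuous_id.sub continuous_const).norm.pow 2).measurable.mul
      (hgd_meas i)).ennreal_ofReal
  calc ∫⁻ x, ((fun x => ENNReal.ofReal (mixDensity θ N m Cov M x))
          * fun x => ENNReal.ofReal (gammaF m x)) x
      ≤ ∫⁻ x, ∑ i, ENNReal.ofReal (θ i / N i)
          * ENNReal.ofReal (‖x - m i‖ ^ 2 * gaussDensity (m i) (Cov i) x) :=
        lintegral_mono hpt
    _ = ∑ i, ∫⁻ x, ENNReal.ofReal (θ i / N i)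
          * ENNReal.ofReal (‖x - m i‖ ^ 2 * gaussDensity (m i) (Cov i) x) :=
        lintegral_finset_sum _ fun i _ => ((hterm_meas i).const_mul _)
    _ = ∑ i, ENNReal.ofReal (θ i / N i)
          * ∫⁻ x, ENNReal.ofReal (‖x - m i‖ ^ 2 * gaussDensity (m i) (Cov i) x) := by
        refine Finset.sum_congr rfl fun i _ => ?_
        exact lintegral_const_mul _ (hterm_meas i)
    _ ≤ ∑ _i : Fin k, ENNReal.ofReal (θmax / (1 - η)) * ENNReal.ofReal (σ ^ 2 * d) := by
        apply Finset.sum_le_sum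
        intro i _
        exact mul_le_mul' (ENNReal.ofReal_le_ofReal (hratio i))
          (gauss_moment_le (m i) (Cov i) (hpd i) hσ (hup i))
    _ ≤ ENNReal.ofReal (σ ^ 2 * k * θmax * d / (1 - η)) := by
        rw [Finset.sum_const, Finset.card_univ, Fintype.card_fin, nsmul_eq_mul,
          ← ENNReal.ofReal_natCast k,
          ← ENNReal.ofReal_mul (div_nonneg hθmaxpos.le h1η.le),
          ← ENNReal.ofReal_mul (Nat.cast_nonneg k)]
        apply ENNReal.ofReal_le_ofReal
        rw [show (k:ℝ) * (θmax / (1 - η) * (σ ^ 2 * d))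
          = σ ^ 2 * k * θmax * d / (1 - η) from by ring]

end
end
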